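/- Let n ≥ 2 be an integer, N > 0, and let f, w : ℝ^n → ℝ be bounded continuous functions. Then lim_{σ→0+} ∫_{ℝ^n} f(s) w(s) (2πσ²)^{−1/2} e^{−(|s|²−N)²/(2σ²)} ds = (1/2) N^{n/2−1} ∫_{S^{n−1}} f(√N Ω) w(√N Ω) dΩ, where dΩ denotes the surface measure on the unit sphere S^{n−1} ⊂ ℝ^n and |s| is the Euclidean norm. -/

import Mathlib

open MeasureTheory
noncomputable section

section GaussDeltaAux
open Real Set Metric Filter

/-- The 1D Gaussian kernel. -/
def gker (σ x : ℝ) : ℝ := (Real.sqrt (2 * Real.pi * σ ^ 2))⁻¹ * Real.exp (-x ^ 2 / (2 * σ ^ 2))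

lemma exp_quad_bound (σ N t : ℝ) (hσ : 0 < σ) :
    Real.exp (-(t - N) ^ 2 / (2 * σ ^ 2)) ≤ Real.exp (σ ^ 2 / 2 + N) * Real.exp (-t) := by
  rw [← Real.exp_add]
  apply Real.exp_le_exp.2
  rw [div_le_iff₀ (by positivity)]
  nlinarith [sq_nonneg (t - N - σ ^ 2), sq_nonneg σ]

lemma integrable_exp_neg_norm_sq (n : ℕ) :
    Integrable (fun v : EuclideanSpace ℝ (Fin n) => Real.exp (-‖v‖ ^ 2)) := by
  have h := (GaussianFourier.integrable_cexp_neg_mul_sq_norm_add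
    (V := EuclideanSpace ℝ (Fin n)) (b := 1) (by norm_num) 0 0).norm
  apply h.congr
  filter_upwards with v
  rw [Complex.norm_exp]
  norm_num [← Complex.ofReal_pow]

lemma integrable_F {n : ℕ} (N : ℝ) {σ : ℝ} (hσ : 0 < σ)
    (g : BoundedContinuousFunction (EuclideanSpace ℝ (Fin n)) ℝ) :
    Integrable (fun s : EuclideanSpace ℝ (Fin n) => g s * gker σ (‖s‖ ^ 2 - N)) := by
  have hcont : Continuous (fun s : EuclideanSpace ℝ (Fin n) => g s * gker σ (‖s‖ ^ 2 - N)) := by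
    unfold gker; fun_prop
  refine (((integrable_exp_neg_norm_sq n).const_mul
    (‖g‖ * ((Real.sqrt (2 * Real.pi * σ ^ 2))⁻¹ * Real.exp (σ ^ 2 / 2 + N)))).mono'
      hcont.aestronglyMeasurable ?_)
  filter_upwards with s
  have h1 : |g s| ≤ ‖g‖ := g.norm_coe_le_norm s
  have h2 := exp_quad_bound σ N (‖s‖ ^ 2) hσ
  have h3 : (0:ℝ) < (Real.sqrt (2 * Real.pi * σ ^ 2))⁻¹ := by
    have : (0:ℝ) < 2 * Real.pi * σ ^ 2 := by positivity
    positivity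
  rw [Real.norm_eq_abs, abs_mul]
  have h4 : |gker σ (‖s‖ ^ 2 - N)| = (Real.sqrt (2 * Real.pi * σ ^ 2))⁻¹ *
      Real.exp (-(‖s‖ ^ 2 - N) ^ 2 / (2 * σ ^ 2)) := by
    rw [gker, abs_mul, abs_of_pos h3, abs_of_pos (Real.exp_pos _)]
  rw [h4]
  calc |g s| * ((Real.sqrt (2 * Real.pi * σ ^ 2))⁻¹ *
        Real.exp (-(‖s‖ ^ 2 - N) ^ 2 / (2 * σ ^ 2)))
      ≤ ‖g‖ * ((Real.sqrt (2 * Real.pi * σ ^ 2))⁻¹ *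
        (Real.exp (σ ^ 2 / 2 + N) * Real.exp (-‖s‖ ^ 2))) := by
        apply mul_le_mul h1 (by gcongr) (by positivity) (norm_nonneg g)
    _ = ‖g‖ * ((Real.sqrt (2 * Real.pi * σ ^ 2))⁻¹ * Real.exp (σ ^ 2 / 2 + N)) *
        Real.exp (-‖s‖ ^ 2) := by ring

lemma integral_volumeIoiPow (m : ℕ) (ψ : ℝ → ℝ) :
    ∫ r : Ioi (0:ℝ), ψ r ∂(Measure.volumeIoiPow m) = ∫ r in Ioi (0:ℝ), r ^ m * ψ r := by
  simp only [Measure.volumeIoiPow, ENNReal.ofReal]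
  rw [integral_withDensity_eq_integral_smul
    ((measurable_subtype_coe.pow_const _).real_toNNReal) (fun r : Ioi (0:ℝ) => ψ r)]
  rw [integral_subtype_comap measurableSet_Ioi (fun a : ℝ => Real.toNNReal (a ^ m) • ψ a)]
  refine setIntegral_congr_fun measurableSet_Ioi fun x hx => ?_
  rw [NNReal.smul_def, Real.coe_toNNReal _ (pow_nonneg (le_of_lt hx) _), smul_eq_mul]


lemma polar_step {n : ℕ} (hn : 2 ≤ n) (N : ℝ) {σ : ℝ} (hσ : 0 < σ)
    (g : BoundedContinuousFunction (EuclideanSpace ℝ (Fin n)) ℝ)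
    (hF : Integrable (fun s : EuclideanSpace ℝ (Fin n) => g s * gker σ (‖s‖ ^ 2 - N))) :
    ∫ s : EuclideanSpace ℝ (Fin n), g s * gker σ (‖s‖ ^ 2 - N) =
    ∫ r in Ioi (0:ℝ), r ^ (n - 1) *
      ((∫ ω : sphere (0 : EuclideanSpace ℝ (Fin n)) 1,
        g ((Real.sqrt (r^2)) • (ω : EuclideanSpace ℝ (Fin n)))
          ∂((volume : Measure (EuclideanSpace ℝ (Fin n))).toSphere)) * gker σ (r ^ 2 - N)) := by
  set E := EuclideanSpace ℝ (Fin n)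
  set μ : Measure E := volume
  have hdim : Module.finrank ℝ E = n := finrank_euclideanSpace_fin
  haveI : Nontrivial E := Module.nontrivial_of_finrank_pos (R := ℝ) (by omega)
  set F : E → ℝ := fun s => g s * gker σ (‖s‖ ^ 2 - N) with hFdef
  have h0 : MeasurableSet ({0}ᶜ : Set E) := (measurableSet_singleton 0).compl
  have he : MeasurableEmbedding (Subtype.val : ({0}ᶜ : Set E) → E) :=
    MeasurableEmbedding.subtype_coe h0
  set Φ : sphere (0 : E) 1 × Ioi (0:ℝ) → ℝ := fun p => F ((p.2 : ℝ) • (p.1 : E)) with hΦdef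
  have hmp := μ.measurePreserving_homeomorphUnitSphereProd
  have hcomp : ∀ x : ({0}ᶜ : Set E), Φ (homeomorphUnitSphereProd E x) = F x := by
    intro x
    have hx : (x : E) ≠ 0 := x.2
    simp only [hΦdef, homeomorphUnitSphereProd_apply_snd_coe,
      homeomorphUnitSphereProd_apply_fst_coe]
    rw [smul_inv_smul₀ (norm_ne_zero_iff.2 hx)]
  -- integrability transfer
  have hF1 : Integrable (fun x : ({0}ᶜ : Set E) => F x) (μ.comap Subtype.val) := by
    have h1 : IntegrableOn F ({0}ᶜ) μ := hF.integrableOn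
    have h2 := (he.integrableOn_iff_comap (f := F) (μ := μ) (s := {0}ᶜ)
      (by rw [Subtype.range_coe])).1 h1
    simp [IntegrableOn, Subtype.coe_preimage_self] at h2; exact h2
  have hΦi : Integrable Φ (μ.toSphere.prod (Measure.volumeIoiPow (Module.finrank ℝ E - 1))) := by
    rw [← hmp.integrable_comp_emb (Homeomorph.measurableEmbedding _)]
    exact hF1.congr (Filter.Eventually.of_forall fun x => (hcomp x).symm)
  calc ∫ s, F s ∂μ = ∫ x in ({0}ᶜ : Set E), F x ∂μ := by
        rw [restrict_compl_singleton]
    _ = ∫ x : ({0}ᶜ : Set E), F x ∂(μ.comap Subtype.val) :=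
        (integral_subtype_comap h0 F).symm
    _ = ∫ x : ({0}ᶜ : Set E), Φ (homeomorphUnitSphereProd E x) ∂(μ.comap Subtype.val) :=
        (integral_congr_ae (Filter.Eventually.of_forall fun x => (hcomp x).symm))
    _ = ∫ p, Φ p ∂(μ.toSphere.prod (Measure.volumeIoiPow (Module.finrank ℝ E - 1))) :=
        hmp.integral_comp (Homeomorph.measurableEmbedding _) Φ
    _ = ∫ r : Ioi (0:ℝ), ∫ ω : sphere (0 : E) 1, Φ (ω, r) ∂μ.toSphere
          ∂(Measure.volumeIoiPow (Module.finrank ℝ E - 1)) :=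
        integral_prod_symm Φ hΦi
    _ = ∫ r in Ioi (0:ℝ), r ^ (n - 1) *
          ((∫ ω : sphere (0 : E) 1, g ((Real.sqrt (r^2)) • (ω : E)) ∂μ.toSphere) *
            gker σ (r ^ 2 - N)) := by
        rw [hdim, ← integral_volumeIoiPow (n - 1)
          (fun r : ℝ => (∫ ω : sphere (0 : E) 1, g ((Real.sqrt (r^2)) • (ω : E)) ∂μ.toSphere) *
            gker σ (r ^ 2 - N))]
        refine integral_congr_ae (Filter.Eventually.of_forall fun r => ?_)
        have hr : (0:ℝ) < r := r.2
        have hsq : Real.sqrt ((r:ℝ)^2) = (r:ℝ) := Real.sqrt_sq hr.le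
        have hnrm : ∀ ω : sphere (0 : E) 1, ‖(r : ℝ) • (ω : E)‖ = (r:ℝ) := by
          intro ω
          rw [norm_smul, mem_sphere_zero_iff_norm.1 ω.2]
          simp [abs_of_pos hr]
        calc ∫ ω : sphere (0 : E) 1, Φ (ω, r) ∂μ.toSphere
            = ∫ ω : sphere (0 : E) 1, g ((Real.sqrt ((r:ℝ)^2)) • (ω : E)) * gker σ ((r:ℝ)^2 - N)
              ∂μ.toSphere := by
              refine integral_congr_ae (Filter.Eventually.of_forall fun ω => ?_)
              simp only [hΦdef, hFdef, hnrm ω, hsq]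
          _ = (∫ ω : sphere (0 : E) 1, g ((Real.sqrt ((r:ℝ)^2)) • (ω : E)) ∂μ.toSphere) *
              gker σ ((r:ℝ)^2 - N) := by
              rw [integral_mul_const]

lemma subst_sq {n : ℕ} (hn : 2 ≤ n) (Q : ℝ → ℝ) :
    ∫ r in Ioi (0:ℝ), r ^ (n - 1) * Q (r ^ 2) =
    ∫ u in Ioi (0:ℝ), (1/2) * u ^ ((n:ℝ)/2 - 1) * Q u := by
  rw [← integral_comp_rpow_Ioi (fun u => (1/2) * u ^ ((n:ℝ)/2 - 1) * Q u) (p := 2) two_ne_zero]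
  refine setIntegral_congr_fun measurableSet_Ioi fun x hx => ?_
  have hx0 : (0:ℝ) < x := hx
  have h2 : x ^ (2:ℝ) = x ^ 2 := by
    rw [show (2:ℝ) = ((2:ℕ):ℝ) by norm_num, Real.rpow_natCast]
  have h21 : x ^ ((2:ℝ) - 1) = x := by norm_num
  have h3 : (x ^ (2:ℝ)) ^ ((n:ℝ)/2 - 1) = x ^ ((n:ℝ) - 2) := by
    rw [← Real.rpow_mul hx0.le]; ring_nf
  have h4 : ((n:ℝ) - 2) = ((n - 2 : ℕ) : ℝ) := by
    rw [Nat.cast_sub hn]; norm_num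
  have h5 : x ^ ((n:ℝ) - 2) = x ^ (n - 2 : ℕ) := by
    rw [h4, Real.rpow_natCast]
  have h6 : x * x ^ (n - 2 : ℕ) = x ^ (n - 1 : ℕ) := by
    rw [← pow_succ']
    congr 1
    omega
  rw [smul_eq_mul, h21, h2, ← h2, h3, h5]
  rw [show |(2:ℝ)| = 2 by norm_num]
  rw [← h6]; ring

lemma subst_affine {N σ : ℝ} (hσ : 0 < σ) (H : ℝ → ℝ) :
    ∫ u, H u * gker σ (u - N) =
    ∫ y, H (N + σ * y) * ((Real.sqrt (2 * Real.pi))⁻¹ * Real.exp (-y ^ 2 / 2)) := by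
  set W : ℝ → ℝ := fun u => H u * gker σ (u - N) with hW
  have h1 : ∫ x, W (σ * x + N) = |σ⁻¹| • ∫ y, W (y + N) :=
    Measure.integral_comp_mul_left (fun t => W (t + N)) σ
  rw [integral_add_right_eq_self W N] at h1
  have h2 : ∫ u, W u = σ * ∫ x, W (σ * x + N) := by
    rw [h1, abs_of_pos (inv_pos.2 hσ), smul_eq_mul, ← mul_assoc,
      mul_inv_cancel₀ hσ.ne', one_mul]
  rw [h2, ← integral_const_mul]
  refine integral_congr_ae (Eventually.of_forall fun y => ?_)
  have hs : Real.sqrt (2 * Real.pi * σ ^ 2) = Real.sqrt (2 * Real.pi) * σ := by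
    rw [Real.sqrt_mul (by positivity) (σ ^ 2), Real.sqrt_sq hσ.le]
  have he : -(σ * y + N - N) ^ 2 / (2 * σ ^ 2) = -y ^ 2 / 2 := by
    field_simp; ring
  have hσne : σ ≠ 0 := hσ.ne'
  have hsne : Real.sqrt (2 * Real.pi) ≠ 0 := by positivity
  simp only [hW, gker, he, hs, show σ * y + N = N + σ * y from by ring]
  rw [mul_inv]
  field_simp
  rw [show -((N + σ * y - N) ^ 2 / (σ ^ 2 * 2)) = -(y ^ 2 / 2) from by
    rw [add_sub_cancel_left, mul_pow, mul_div_mul_left _ _ (pow_ne_zero 2 hσne)]]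

lemma rpow_growth {n : ℕ} (hn : 2 ≤ n) {N u y σ : ℝ} (hN : 0 < N) (hu : 0 < u)
    (hσ : σ ∈ Ioo (0:ℝ) 1) (huv : u = N + σ * y) :
    u ^ ((n:ℝ)/2 - 1) ≤ (1 + (N+1)^n) * Real.exp (n * |y|) := by
  have hν : 0 ≤ (n:ℝ)/2 - 1 := by
    have : (2:ℝ) ≤ n := by exact_mod_cast hn
    linarith
  have hexp1 : (1:ℝ) ≤ Real.exp (n * |y|) := by
    apply Real.one_le_exp; positivity
  have hub : u ≤ N + |y| := by
    have : σ * y ≤ |y| := by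
      calc σ * y ≤ |σ * y| := le_abs_self _
        _ = σ * |y| := by rw [abs_mul, abs_of_pos hσ.1]
        _ ≤ 1 * |y| := by apply mul_le_mul_of_nonneg_right hσ.2.le (abs_nonneg y)
        _ = |y| := one_mul _
    linarith [huv]
  have key : u ^ ((n:ℝ)/2 - 1) ≤ 1 + (N + |y|)^n := by
    rcases le_or_gt u 1 with h1 | h1
    · have := Real.rpow_le_one hu.le h1 hν
      have h2 : (0:ℝ) ≤ (N + |y|)^n := by positivity
      linarith
    · calc u ^ ((n:ℝ)/2 - 1) ≤ u ^ ((n:ℝ)) := by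
            apply Real.rpow_le_rpow_of_exponent_le h1.le
            have : (0:ℝ) ≤ n := by positivity
            linarith
        _ = u ^ n := by rw [Real.rpow_natCast]
        _ ≤ (N + |y|)^n := by
            apply pow_le_pow_left₀ hu.le hub
        _ ≤ 1 + (N + |y|)^n := by linarith
  have key2 : (N + |y|)^n ≤ (N+1)^n * Real.exp (n * |y|) := by
    calc (N + |y|)^n ≤ ((N+1) * (1+|y|))^n := by
          apply pow_le_pow_left₀ (by positivity)
          nlinarith [abs_nonneg y, hN]
      _ = (N+1)^n * (1+|y|)^n := mul_pow _ _ _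
      _ ≤ (N+1)^n * Real.exp (n * |y|) := by
          apply mul_le_mul_of_nonneg_left _ (by positivity)
          calc (1+|y|)^n ≤ (Real.exp |y|)^n := by
                apply pow_le_pow_left₀ (by positivity)
                linarith [Real.add_one_le_exp |y|]
            _ = Real.exp (n * |y|) := by rw [← Real.exp_nat_mul]
  calc u ^ ((n:ℝ)/2 - 1) ≤ 1 + (N + |y|)^n := key
    _ ≤ 1 * Real.exp (n * |y|) + (N+1)^n * Real.exp (n * |y|) := by
        rw [one_mul]; exact add_le_add hexp1 key2
    _ = (1 + (N+1)^n) * Real.exp (n * |y|) := by ring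

lemma exp_gauss_bound (n : ℕ) (y : ℝ) :
    Real.exp ((n:ℝ) * |y|) * Real.exp (-y^2/2) ≤ Real.exp ((n:ℝ)^2) * Real.exp (-(4⁻¹) * y^2) := by
  rw [← Real.exp_add, ← Real.exp_add]
  apply Real.exp_le_exp.2
  nlinarith [sq_nonneg (|y|/2 - n), sq_abs y]

lemma oneD {n : ℕ} (hn : 2 ≤ n) {N : ℝ} (hN : 0 < N) (G : ℝ → ℝ) (hGc : Continuous G)
    (CG : ℝ) (hCG : ∀ r, |G r| ≤ CG) :
    Tendsto (fun σ : ℝ => ∫ u in Ioi (0:ℝ),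
        (1/2) * u ^ ((n:ℝ)/2 - 1) * (G (Real.sqrt u) * gker σ (u - N)))
      (nhdsWithin 0 (Ioi 0))
      (nhds ((1/2) * N ^ ((n:ℝ)/2 - 1) * G (Real.sqrt N))) := by
  have hCG0 : 0 ≤ CG := (abs_nonneg _).trans (hCG 0)
  set ν : ℝ := (n:ℝ)/2 - 1 with hνdef
  set c : ℝ := (Real.sqrt (2 * Real.pi))⁻¹ with hcdef
  have hc0 : 0 < c := by
    rw [hcdef]; positivity
  have hν : (0:ℝ) ≤ ν := by
    rw [hνdef]
    have : (2:ℝ) ≤ n := by exact_mod_cast hn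
    linarith
  set H : ℝ → ℝ := fun u => if 0 < u then (1/2) * u ^ ν * G (Real.sqrt u) else 0 with hHdef
  have hHm : Measurable H := by
    apply Measurable.ite measurableSet_Ioi
    · exact ((continuous_const.mul (Real.continuous_rpow_const hν)).mul
        (hGc.comp Real.continuous_sqrt)).measurable
    · exact measurable_const
  -- pointwise bound for H
  have hHb : ∀ {σ y : ℝ}, σ ∈ Ioo (0:ℝ) 1 →
      |H (N + σ * y)| ≤ (1/2) * CG * ((1 + (N+1)^n) * Real.exp (n * |y|)) := by
    intro σ y hσ
    by_cases h : 0 < N + σ * y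
    · rw [hHdef]
      simp only [if_pos h]
      rw [abs_mul, abs_mul]
      have h1 : |(1:ℝ)/2| = 1/2 := by norm_num
      have h2 : |(N + σ * y) ^ ν| = (N + σ * y) ^ ν := abs_of_nonneg (Real.rpow_nonneg h.le ν)
      rw [h1, h2]
      have h3 := rpow_growth hn hN h hσ rfl
      calc 1/2 * (N + σ * y) ^ ν * |G (Real.sqrt (N + σ * y))|
          ≤ 1/2 * ((1 + (N+1)^n) * Real.exp (n * |y|)) * CG := by
            apply mul_le_mul _ (hCG _) (abs_nonneg _) (by positivity)
            apply mul_le_mul_of_nonneg_left h3 (by norm_num)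
        _ = (1/2) * CG * ((1 + (N+1)^n) * Real.exp (n * |y|)) := by ring
    · rw [hHdef]
      simp only [if_neg h, abs_zero]
      positivity
  -- continuity of H at N
  have hHN : ContinuousAt H N := by
    have h1 : ContinuousAt (fun u : ℝ => (1/2) * u ^ ν * G (Real.sqrt u)) N := by
      apply ContinuousAt.mul
      · exact continuousAt_const.mul (Real.continuousAt_rpow_const N ν (Or.inl hN.ne'))
      · exact (hGc.comp Real.continuous_sqrt).continuousAt
    apply h1.congr
    filter_upwards [Ioi_mem_nhds hN] with u hu
    rw [hHdef]; simp only [if_pos (mem_Ioi.1 hu)]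
  -- the DCT
  set Fn : ℝ → ℝ → ℝ := fun σ y => H (N + σ * y) * (c * Real.exp (-y ^ 2 / 2)) with hFndef
  have key : Tendsto (fun σ => ∫ y, Fn σ y) (nhdsWithin 0 (Ioi 0))
      (nhds (∫ y, H N * (c * Real.exp (-y ^ 2 / 2)))) := by
    apply tendsto_integral_filter_of_dominated_convergence
      (bound := fun y => (1/2) * CG * (1 + (N+1)^n) * c * Real.exp ((n:ℝ)^2) *
        Real.exp (-(4⁻¹) * y^2))
    · filter_upwards with σ
      apply Measurable.aestronglyMeasurable
      exact (hHm.comp (by fun_prop : Measurable fun y : ℝ => N + σ * y)).mul (by fun_prop)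
    · filter_upwards [Ioo_mem_nhdsGT_of_mem (by constructor <;> norm_num : (0:ℝ) ∈ Ico (0:ℝ) 1)]
        with σ hσ
      filter_upwards with y
      have h1 := hHb (y := y) hσ
      rw [Real.norm_eq_abs, abs_mul]
      have h2 : |c * Real.exp (-y^2/2)| = c * Real.exp (-y^2/2) :=
        abs_of_pos (by positivity)
      rw [h2]
      calc |H (N + σ * y)| * (c * Real.exp (-y^2/2))
          ≤ ((1/2) * CG * ((1 + (N+1)^n) * Real.exp (n * |y|))) * (c * Real.exp (-y^2/2)) := by
            apply mul_le_mul_of_nonneg_right h1 (by positivity)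
        _ = (1/2) * CG * (1 + (N+1)^n) * c * (Real.exp ((n:ℝ) * |y|) * Real.exp (-y^2/2)) := by
            ring
        _ ≤ (1/2) * CG * (1 + (N+1)^n) * c * (Real.exp ((n:ℝ)^2) * Real.exp (-(4⁻¹) * y^2)) := by
            apply mul_le_mul_of_nonneg_left (exp_gauss_bound n y) (by positivity)
        _ = (1/2) * CG * (1 + (N+1)^n) * c * Real.exp ((n:ℝ)^2) * Real.exp (-(4⁻¹) * y^2) := by
            ring
    · exact ((integrable_exp_neg_mul_sq (by norm_num : (0:ℝ) < 4⁻¹)).const_mul _)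
    · filter_upwards with y
      have haff : Tendsto (fun σ : ℝ => N + σ * y) (nhdsWithin 0 (Ioi 0)) (nhds N) := by
        have hco : Continuous fun σ : ℝ => N + σ * y := by fun_prop
        have h : Tendsto (fun σ : ℝ => N + σ * y) (nhds 0) (nhds (N + 0 * y)) :=
          hco.tendsto 0
        rw [show N + 0 * y = N from by ring] at h
        exact h.mono_left nhdsWithin_le_nhds
      exact (hHN.tendsto.comp haff).mul_const _
  -- value of the limit integral
  have hval : ∫ y, H N * (c * Real.exp (-y ^ 2 / 2)) = H N := by
    have hint : ∫ y : ℝ, Real.exp (-y ^ 2 / 2) = Real.sqrt (2 * Real.pi) := by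
      have h1 : ∀ y : ℝ, Real.exp (-y^2/2) = Real.exp (-(2⁻¹ : ℝ) * y^2) := by
        intro y; congr 1; ring
      simp_rw [h1]
      rw [integral_gaussian]
      congr 1
      field_simp
    calc ∫ y, H N * (c * Real.exp (-y ^ 2 / 2)) = (H N * c) * ∫ y, Real.exp (-y^2/2) := by
          rw [← integral_const_mul]
          congr 1; funext y; ring
      _ = H N := by
          rw [hint, hcdef, mul_assoc, inv_mul_cancel₀ (by positivity), mul_one]
  beta_reduce at key
  rw [hval] at key
  have hHNval : H N = (1/2) * N ^ ν * G (Real.sqrt N) := by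
    rw [hHdef]; simp only [if_pos hN]
  rw [hHNval] at key
  -- now transfer along eventual equality
  apply key.congr'
  filter_upwards [self_mem_nhdsWithin] with σ hσ
  have hσ0 : (0:ℝ) < σ := hσ
  -- set integral equals full integral of H * gker
  have hA : ∫ u in Ioi (0:ℝ), (1/2) * u ^ ν * (G (Real.sqrt u) * gker σ (u - N)) =
      ∫ u, H u * gker σ (u - N) := by
    calc ∫ u in Ioi (0:ℝ), (1/2) * u ^ ν * (G (Real.sqrt u) * gker σ (u - N))
        = ∫ u in Ioi (0:ℝ), H u * gker σ (u - N) := by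
          refine setIntegral_congr_fun measurableSet_Ioi fun u hu => ?_
          simp only [hHdef, if_pos (mem_Ioi.1 hu)]
          ring
      _ = ∫ u, H u * gker σ (u - N) := by
          apply setIntegral_eq_integral_of_forall_compl_eq_zero
          intro u hu
          simp only [hHdef, if_neg (by simpa using hu : ¬ (0:ℝ) < u)]
          rw [zero_mul]
  rw [hFndef, hA, subst_affine hσ0 H]

lemma G_continuous (n : ℕ) (g : BoundedContinuousFunction (EuclideanSpace ℝ (Fin n)) ℝ) :
    Continuous fun r : ℝ => ∫ ω : sphere (0 : EuclideanSpace ℝ (Fin n)) 1,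
      g (r • (ω : EuclideanSpace ℝ (Fin n)))
        ∂((volume : Measure (EuclideanSpace ℝ (Fin n))).toSphere) := by
  apply continuous_of_dominated (bound := fun _ => ‖g‖)
  · intro r
    exact (g.continuous.comp ((continuous_subtype_val).const_smul r)).aestronglyMeasurable
  · intro r
    filter_upwards with ω
    exact g.norm_coe_le_norm _
  · exact integrable_const _
  · filter_upwards with ω
    exact g.continuous.comp (continuous_id.smul continuous_const)

lemma G_bound (n : ℕ) (g : BoundedContinuousFunction (EuclideanSpace ℝ (Fin n)) ℝ) (r : ℝ) :
    |∫ ω : sphere (0 : EuclideanSpace ℝ (Fin n)) 1,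
      g (r • (ω : EuclideanSpace ℝ (Fin n)))
        ∂((volume : Measure (EuclideanSpace ℝ (Fin n))).toSphere)| ≤
    ‖g‖ * (((volume : Measure (EuclideanSpace ℝ (Fin n))).toSphere) univ).toReal := by
  rw [← Real.norm_eq_abs]
  apply norm_integral_le_of_norm_le_const
  filter_upwards with ω
  exact g.norm_coe_le_norm _

end GaussDeltaAux

/-- Appendix A: the Gaussian approximations of the δ-constraint
`δ(|s|² − N)` converge to the weighted surface integral over the sphere of radius `√N`:
for bounded continuous `f, w`,
`lim_{σ→0⁺} ∫ f w (2πσ²)^{−1/2} e^{−(|s|²−N)²/(2σ²)} = (1/2) N^{n/2−1} ∫_{S^{n−1}} (fw)(√N Ω) dΩ`. -/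
theorem gaussian_delta_approximation
    (n : ℕ) (hn : 2 ≤ n) (N : ℝ) (hN : 0 < N)
    (f w : BoundedContinuousFunction (EuclideanSpace ℝ (Fin n)) ℝ) :
    Filter.Tendsto
      (fun σ : ℝ =>
        ∫ s : EuclideanSpace ℝ (Fin n),
          f s * w s *
            ((Real.sqrt (2 * Real.pi * σ ^ 2))⁻¹ *
              Real.exp (-(‖s‖ ^ 2 - N) ^ 2 / (2 * σ ^ 2))))
      (nhdsWithin 0 (Set.Ioi 0))
      (nhds ((1 / 2) * N ^ ((n : ℝ) / 2 - 1) *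
        ∫ Ω : Metric.sphere (0 : EuclideanSpace ℝ (Fin n)) 1,
          f (Real.sqrt N • (Ω : EuclideanSpace ℝ (Fin n))) *
            w (Real.sqrt N • (Ω : EuclideanSpace ℝ (Fin n)))
          ∂((volume : Measure (EuclideanSpace ℝ (Fin n))).toSphere))) := by
  set g : BoundedContinuousFunction (EuclideanSpace ℝ (Fin n)) ℝ := f * w with hg
  have key := oneD hn hN
    (fun r => ∫ ω : Metric.sphere (0 : EuclideanSpace ℝ (Fin n)) 1,
      g (r • (ω : EuclideanSpace ℝ (Fin n)))
        ∂((volume : Measure (EuclideanSpace ℝ (Fin n))).toSphere))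
    (G_continuous n g)
    (‖g‖ * (((volume : Measure (EuclideanSpace ℝ (Fin n))).toSphere) Set.univ).toReal)
    (G_bound n g)
  have hval : (∫ ω : Metric.sphere (0 : EuclideanSpace ℝ (Fin n)) 1,
      g (Real.sqrt N • (ω : EuclideanSpace ℝ (Fin n)))
        ∂((volume : Measure (EuclideanSpace ℝ (Fin n))).toSphere)) =
      ∫ Ω : Metric.sphere (0 : EuclideanSpace ℝ (Fin n)) 1,
        f (Real.sqrt N • (Ω : EuclideanSpace ℝ (Fin n))) *
          w (Real.sqrt N • (Ω : EuclideanSpace ℝ (Fin n)))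
        ∂((volume : Measure (EuclideanSpace ℝ (Fin n))).toSphere) := by
    refine integral_congr_ae (Filter.Eventually.of_forall fun ω => ?_)
    simp [hg]
  beta_reduce at key
  rw [hval] at key
  apply key.congr'
  filter_upwards [self_mem_nhdsWithin] with σ hσ
  have hσ0 : (0:ℝ) < σ := hσ
  have h1 : (∫ s : EuclideanSpace ℝ (Fin n),
      f s * w s * ((Real.sqrt (2 * Real.pi * σ ^ 2))⁻¹ *
        Real.exp (-(‖s‖ ^ 2 - N) ^ 2 / (2 * σ ^ 2)))) =
      ∫ s : EuclideanSpace ℝ (Fin n), g s * gker σ (‖s‖ ^ 2 - N) := by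
    refine integral_congr_ae (Filter.Eventually.of_forall fun s => ?_)
    simp [hg, gker]
  have h2 := polar_step hn N hσ0 g (integrable_F N hσ0 g)
  have h3 := subst_sq hn (fun u =>
    (∫ ω : Metric.sphere (0 : EuclideanSpace ℝ (Fin n)) 1,
      g (Real.sqrt u • (ω : EuclideanSpace ℝ (Fin n)))
        ∂((volume : Measure (EuclideanSpace ℝ (Fin n))).toSphere)) * gker σ (u - N))
  rw [h1, h2, h3]
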